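/- The forward- and backward-dependent unfactorized CDM model classes coincide: for every parameter θ_F = (δ, β, U) there exists a parameter θ_B such that for all covariates x : 𝒰 → ℝ^d, all choice sets S ⊆ 𝒰 with |S| ≥ 2, and all j ∈ S, the forward-dependent choice probability under θ_F equals the backward-dependent choice probability under θ_B; and conversely, for every θ_B there exists θ_F with the same property. -/
import Mathlib


open Finset

/-- Forward-dependent representative utility of the unfactorized CDM:
`V^F_θ(j|S) = δ_j + β·x_j + Σ_{l ∈ S, l ≠ j} u_{jl}`. -/
noncomputable def VF {𝒰 : Type*} [DecidableEq 𝒰] {d : ℕ}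
    (δ : 𝒰 → ℝ) (β : Fin d → ℝ) (u : 𝒰 → 𝒰 → ℝ)
    (x : 𝒰 → Fin d → ℝ) (S : Finset 𝒰) (j : 𝒰) : ℝ :=
  δ j + (∑ i, β i * x j i) + ∑ l ∈ S.erase j, u j l

/-- Backward-dependent representative utility of the unfactorized CDM:
`V^B_θ(j|S) = δ_j + β·x_j + Σ_{l ∈ 𝒰 \ S} u_{jl}`. -/
noncomputable def VB {𝒰 : Type*} [Fintype 𝒰] [DecidableEq 𝒰] {d : ℕ}
    (δ : 𝒰 → ℝ) (β : Fin d → ℝ) (u : 𝒰 → 𝒰 → ℝ)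
    (x : 𝒰 → Fin d → ℝ) (S : Finset 𝒰) (j : 𝒰) : ℝ :=
  δ j + (∑ i, β i * x j i) + ∑ l ∈ Sᶜ, u j l

/-- The forward- and backward-dependent unfactorized CDM model classes coincide: every
forward-dependent parameter has a backward-dependent counterpart inducing identical choice
probabilities on all choice sets of size ≥ 2, and conversely. -/

lemma VB_eq_VF {𝒰 : Type*} [Fintype 𝒰] [DecidableEq 𝒰] {d : ℕ}
    (δ : 𝒰 → ℝ) (β : Fin d → ℝ) (u : 𝒰 → 𝒰 → ℝ)
    (x : 𝒰 → Fin d → ℝ) (S : Finset 𝒰) (j : 𝒰) (hj : j ∈ S) :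
    VB (fun a => δ a + (∑ l, u a l) - u a a) β (fun a b => -u a b) x S j
      = VF δ β u x S j := by
  unfold VF VB
  have h1 : ∑ l ∈ Sᶜ, (-u j ·) l = -((∑ l, u j l) - ∑ l ∈ S, u j l) := by
    rw [Finset.sum_neg_distrib, ← Finset.sum_compl_add_sum S (u j)]
    ring
  have h2 : ∑ l ∈ S.erase j, u j l = (∑ l ∈ S, u j l) - u j j := by
    rw [Finset.sum_erase_eq_sub hj]
  rw [h2]
  simp only at h1 ⊢
  rw [h1]
  ring

theorem cdm_model_classes_coincide (𝒰 : Type*) [Fintype 𝒰] [DecidableEq 𝒰] (d : ℕ) :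
    (∀ (δF : 𝒰 → ℝ) (βF : Fin d → ℝ) (uF : 𝒰 → 𝒰 → ℝ),
      ∃ (δB : 𝒰 → ℝ) (βB : Fin d → ℝ) (uB : 𝒰 → 𝒰 → ℝ),
        ∀ (x : 𝒰 → Fin d → ℝ) (S : Finset 𝒰), 2 ≤ S.card → ∀ j ∈ S,
          Real.exp (VF δF βF uF x S j) / (∑ k ∈ S, Real.exp (VF δF βF uF x S k))
            = Real.exp (VB δB βB uB x S j) / (∑ k ∈ S, Real.exp (VB δB βB uB x S k))) ∧
    (∀ (δB : 𝒰 → ℝ) (βB : Fin d → ℝ) (uB : 𝒰 → 𝒰 → ℝ),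
      ∃ (δF : 𝒰 → ℝ) (βF : Fin d → ℝ) (uF : 𝒰 → 𝒰 → ℝ),
        ∀ (x : 𝒰 → Fin d → ℝ) (S : Finset 𝒰), 2 ≤ S.card → ∀ j ∈ S,
          Real.exp (VF δF βF uF x S j) / (∑ k ∈ S, Real.exp (VF δF βF uF x S k))
            = Real.exp (VB δB βB uB x S j) / (∑ k ∈ S, Real.exp (VB δB βB uB x S k))) := by
  constructor
  · intro δF βF uF
    refine ⟨fun a => δF a + (∑ l, uF a l) - uF a a, βF, fun a b => -uF a b, ?_⟩
    intro x S _ j hj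
    rw [VB_eq_VF δF βF uF x S j hj]
    congr 1
    exact Finset.sum_congr rfl fun k hk => by rw [VB_eq_VF δF βF uF x S k hk]
  · intro δB βB uB
    refine ⟨fun a => δB a + (∑ l, uB a l) - uB a a, βB, fun a b => -uB a b, ?_⟩
    intro x S _ j hj
    have key : ∀ k ∈ S, VF (fun a => δB a + (∑ l, uB a l) - uB a a) βB
        (fun a b => -uB a b) x S k = VB δB βB uB x S k := by
      intro k hk
      have h := VB_eq_VF (fun a => δB a + (∑ l, uB a l) - uB a a) βB
        (fun a b => -uB a b) x S k hk
      rw [← h]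
      unfold VB
      simp only [neg_neg]
      congr 1
      simp [Finset.sum_neg_distrib]
      ring
    rw [key j hj]
    congr 1
    exact Finset.sum_congr rfl fun k hk => by rw [key k hk]
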